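/- Let U be a unitary operator on a separable complex Hilbert space H and let λ be an element of the discrete spectrum of U. Then for every ε > 0 and every nonnegative self-adjoint operator A on H such that the spectral projections E_A([0,R)) converge strongly to the identity as R → ∞ and E_U(X) is compact for any closed arc X of the unit circle disjoint from the essential spectrum, there exists R > 0 such that ‖Uf − λf‖ ≥ (d(λ) − ε)‖f‖ for all f ∈ H with E_A([0,R))f = 0, where d(λ) := dist(λ, σ_ess(U)). -/

import Mathlib

open scoped InnerProductSpace

set_option maxHeartbeats 1000000

noncomputable section

/-- A projection-valued measure on subsets of `α`, acting on a complex Hilbert space `H`. -/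
structure PVM (α : Type*) (H : Type*) [NormedAddCommGroup H] [InnerProductSpace ℂ H]
    [CompleteSpace H] where
  proj : Set α → H →L[ℂ] H
  selfAdj : ∀ S, ContinuousLinearMap.adjoint (proj S) = proj S
  inter : ∀ S T, proj S ∘L proj T = proj (S ∩ T)
  empty : proj ∅ = 0
  univ : proj Set.univ = 1
  countablyAdditive : ∀ f : ℕ → Set α, (Pairwise fun m n => Disjoint (f m) (f n)) →
    ∀ ψ : H, HasSum (fun n => proj (f n) ψ) (proj (⋃ n, f n) ψ)

/-- The discrete spectrum: isolated points of the spectrum which are eigenvalues of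
finite multiplicity. -/
def discreteSpectrum {H : Type*} [NormedAddCommGroup H] [InnerProductSpace ℂ H]
    [CompleteSpace H] (T : H →L[ℂ] H) : Set ℂ :=
  {z | z ∈ spectrum ℂ T ∧ z ∉ closure (spectrum ℂ T \ {z}) ∧
    FiniteDimensional ℂ (LinearMap.ker ((T - z • (1 : H →L[ℂ] H) : H →L[ℂ] H) : H →ₗ[ℂ] H))}

/-- The essential spectrum: the spectrum minus the discrete spectrum. -/
def essentialSpectrum {H : Type*} [NormedAddCommGroup H] [InnerProductSpace ℂ H]
    [CompleteSpace H] (T : H →L[ℂ] H) : Set ℂ :=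
  spectrum ℂ T \ discreteSpectrum T

/-- `E` is the spectral measure of the (normal) operator `T`. -/
structure IsSpectralMeasureOf {H : Type*} [NormedAddCommGroup H] [InnerProductSpace ℂ H]
    [CompleteSpace H] (T : H →L[ℂ] H) (E : PVM ℂ H) : Prop where
  commute : ∀ S, Commute T (E.proj S)
  support : E.proj (spectrum ℂ T) = 1
  lower : ∀ (S : Set ℂ) (z : ℂ) (ψ : H), E.proj S ψ = ψ →
    Metric.infDist z S * ‖ψ‖ ≤ ‖T ψ - z • ψ‖
  upper : ∀ (S : Set ℂ) (z : ℂ) (r : ℝ) (ψ : H), E.proj S ψ = ψ →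
    S ⊆ Metric.closedBall z r → ‖T ψ - z • ψ‖ ≤ r * ‖ψ‖

/-- The closed arc `{z e^{ik} : -θ ≤ k ≤ θ}` of the circle through `z`. -/
def circleArc (z : ℂ) (θ : ℝ) : Set ℂ :=
  (fun k : ℝ => z * Complex.exp (Complex.I * k)) '' Set.Icc (-θ) θ

/- ### Auxiliary lemmas -/

lemma my_abs_sin (k : ℝ) (hk : |k| ≤ Real.pi) : |Real.sin (k/2)| = Real.sin (|k|/2) := by
  have h1 : 0 ≤ Real.sin (|k|/2) :=
    Real.sin_nonneg_of_nonneg_of_le_pi (by positivity) (by linarith [Real.pi_pos])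
  rcases le_or_gt 0 k with h | h
  · rw [abs_of_nonneg h] at *
    exact abs_of_nonneg h1
  · rw [abs_of_neg h] at h1 ⊢
    rw [show -k/2 = -(k/2) by ring, Real.sin_neg] at h1 ⊢
    exact abs_of_nonpos (by linarith)

lemma my_norm_one_sub_exp (k : ℝ) :
    ‖(1 : ℂ) - Complex.exp (Complex.I * k)‖ = 2 * |Real.sin (k/2)| := by
  have hexp : Complex.exp (Complex.I * k) = (Real.cos k : ℂ) + (Real.sin k : ℂ) * Complex.I := by
    rw [mul_comm, Complex.exp_mul_I, Complex.ofReal_cos, Complex.ofReal_sin]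
  have hsq : ‖(1:ℂ) - Complex.exp (Complex.I * k)‖^2 = 2 - 2 * Real.cos k := by
    rw [hexp, Complex.sq_norm]
    simp [Complex.normSq_apply, Complex.cos_ofReal_re, Complex.sin_ofReal_re]
    nlinarith [Real.sin_sq_add_cos_sq k]
  have hc : Real.cos k = 1 - 2 * Real.sin (k/2)^2 := by
    have h := Real.cos_two_mul (k/2)
    have h2 := Real.sin_sq_add_cos_sq (k/2)
    rw [show 2*(k/2) = k by ring] at h
    nlinarith
  have h2 : (2 * |Real.sin (k/2)|)^2 = 2 - 2*Real.cos k := by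
    rw [mul_pow, sq_abs, hc]; ring
  have h3 : ‖(1:ℂ) - Complex.exp (Complex.I * k)‖^2 = (2*|Real.sin (k/2)|)^2 := by
    rw [hsq, h2]
  exact (pow_left_inj₀ (norm_nonneg _) (by positivity) two_ne_zero).mp h3

section Hilbert

variable {H : Type*} [NormedAddCommGroup H] [InnerProductSpace ℂ H] [CompleteSpace H]

/-- Finite additivity for two disjoint sets, derived from countable additivity. -/
lemma PVM.proj_union {α : Type*} (E : PVM α H) {S T : Set α} (h : Disjoint S T) (ψ : H) :
    E.proj (S ∪ T) ψ = E.proj S ψ + E.proj T ψ := by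
  classical
  set f : ℕ → Set α := fun n => if n = 0 then S else if n = 1 then T else ∅ with hf
  have hdisj : Pairwise fun m n => Disjoint (f m) (f n) := by
    intro m n hmn
    simp only [hf]
    split_ifs <;> first | (exfalso; omega) | exact h | exact h.symm | simp
  have hsum := E.countablyAdditive f hdisj ψ
  have hU : (⋃ n, f n) = S ∪ T := by
    apply Set.Subset.antisymm
    · intro x hx
      rcases Set.mem_iUnion.1 hx with ⟨n, hn⟩
      by_cases h0 : n = 0
      · rw [h0] at hn; simp only [hf, if_pos rfl] at hn; exact Or.inl hn
      by_cases h1 : n = 1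
      · rw [h1] at hn; simp only [hf, if_neg one_ne_zero, if_pos rfl] at hn; exact Or.inr hn
      · simp only [hf, if_neg h0, if_neg h1] at hn; exact absurd hn (Set.notMem_empty x)
    · rintro x (hx | hx)
      · exact Set.mem_iUnion.2 ⟨0, by simp [hf, hx]⟩
      · exact Set.mem_iUnion.2 ⟨1, by simp [hf, hx]⟩
  have hzero : ∀ n ∉ ({0, 1} : Finset ℕ), E.proj (f n) ψ = 0 := by
    intro n hn
    simp only [Finset.mem_insert, Finset.mem_singleton, not_or] at hn
    simp only [hf, if_neg hn.1, if_neg hn.2, E.empty]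
    rfl
  have hfin : HasSum (fun n => E.proj (f n) ψ) (∑ n ∈ ({0,1} : Finset ℕ), E.proj (f n) ψ) :=
    hasSum_sum_of_ne_finset_zero hzero
  have hval : (∑ n ∈ ({0,1} : Finset ℕ), E.proj (f n) ψ) = E.proj S ψ + E.proj T ψ := by
    rw [show ({0,1} : Finset ℕ) = insert 0 {1} from rfl, Finset.sum_insert (by decide),
      Finset.sum_singleton]
    simp [hf]
  rw [hU] at hsum
  rw [hsum.unique hfin, hval]

/-- A compact operator sends a bounded weakly-null sequence to a norm-null sequence. -/
lemma compact_weak_null {P : H →L[ℂ] H} (hP : IsCompactOperator P) {u : ℕ → H}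
    (hb : ∀ n, ‖u n‖ ≤ 1)
    (hw : ∀ g : H, Filter.Tendsto (fun n => (inner ℂ g (u n) : ℂ)) Filter.atTop (nhds 0)) :
    Filter.Tendsto (fun n => P (u n)) Filter.atTop (nhds 0) := by
  by_contra hcon
  rw [Metric.tendsto_atTop] at hcon
  push_neg at hcon
  obtain ⟨δ, hδ, hfreq⟩ := hcon
  obtain ⟨φ, hφmono, hφ⟩ := Filter.extraction_of_frequently_atTop
    (Filter.frequently_atTop.2 hfreq)
  obtain ⟨K, hK, hKmem⟩ := hP
  obtain ⟨r, hr, hball⟩ := Metric.mem_nhds_iff.1 hKmem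
  set v : ℕ → H := fun n => P (((r/2 : ℝ) : ℂ) • u (φ n)) with hv
  have hvK : ∀ n, v n ∈ K := by
    intro n
    apply hball
    rw [Metric.mem_ball, dist_zero_right, norm_smul]
    have : ‖((r/2 : ℝ) : ℂ)‖ = r/2 := by
      rw [Complex.norm_real, Real.norm_eq_abs, abs_of_pos (by linarith)]
    rw [this]
    calc r/2 * ‖u (φ n)‖ ≤ r/2 * 1 := by
          exact mul_le_mul_of_nonneg_left (hb _) (by linarith)
      _ < r := by linarith
  obtain ⟨a, haK, ψ, hψmono, hay⟩ := hK.tendsto_subseq hvK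
  have hφψ : Filter.Tendsto (fun n => φ (ψ n)) Filter.atTop Filter.atTop :=
    (hφmono.comp hψmono).tendsto_atTop
  have ha0 : a = 0 := by
    have h1 : Filter.Tendsto (fun n => (inner ℂ a (v (ψ n)) : ℂ)) Filter.atTop
        (nhds (inner ℂ a a : ℂ)) :=
      Filter.Tendsto.inner tendsto_const_nhds hay
    have h2 : Filter.Tendsto (fun n => (inner ℂ a (v (ψ n)) : ℂ)) Filter.atTop (nhds 0) := by
      have heq : ∀ n, (inner ℂ a (v (ψ n)) : ℂ)
          = ((r/2 : ℝ) : ℂ) * inner ℂ (ContinuousLinearMap.adjoint P a) (u (φ (ψ n))) := by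
        intro n
        rw [hv]
        rw [← ContinuousLinearMap.adjoint_inner_left P (((r/2 : ℝ) : ℂ) • u (φ (ψ n))) a]
        rw [inner_smul_right]
      simp only [heq]
      have := ((hw (ContinuousLinearMap.adjoint P a)).comp hφψ).const_mul ((r/2 : ℝ) : ℂ)
      simpa using this
    have := tendsto_nhds_unique h1 h2
    exact inner_self_eq_zero.mp this
  have hlb : ∀ n, r/2 * δ ≤ ‖v (ψ n)‖ := by
    intro n
    rw [hv]
    simp only
    rw [map_smul, norm_smul]
    have h1 : ‖((r/2 : ℝ) : ℂ)‖ = r/2 := by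
      rw [Complex.norm_real, Real.norm_eq_abs, abs_of_pos (by linarith)]
    rw [h1]
    have h2 := hφ (ψ n)
    rw [dist_zero_right] at h2
    exact mul_le_mul_of_nonneg_left h2 (by linarith)
  have hnorm : Filter.Tendsto (fun n => ‖v (ψ n)‖) Filter.atTop (nhds ‖a‖) := hay.norm
  rw [ha0, norm_zero] at hnorm
  have : r/2 * δ ≤ 0 := le_of_tendsto_of_tendsto' tendsto_const_nhds hnorm hlb
  nlinarith

end Hilbert

/-- lower bound `‖Uf - λf‖ ≥ (d(λ) - ε)‖f‖` for vectors spectrally supported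
in `[R, ∞)` with respect to `A`. -/
theorem stmt0 {H : Type*} [NormedAddCommGroup H] [InnerProductSpace ℂ H] [CompleteSpace H]
    [TopologicalSpace.SeparableSpace H]
    (U : H →L[ℂ] H) (hU : U ∈ unitary (H →L[ℂ] H))
    (lam : ℂ) (hlam : lam ∈ discreteSpectrum U)
    (ε : ℝ) (hε : 0 < ε)
    (EA : PVM ℝ H) (hApos : EA.proj (Set.Iio 0) = 0)
    (hconv : ∀ ψ : H, Filter.Tendsto (fun R : ℝ => EA.proj (Set.Ico 0 R) ψ)
      Filter.atTop (nhds ψ))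
    (EU : PVM ℂ H) (hEU : IsSpectralMeasureOf U EU)
    (hcompact : ∀ (z : ℂ) (θ : ℝ), ‖z‖ = 1 →
      Disjoint (circleArc z θ) (essentialSpectrum U) →
      IsCompactOperator (EU.proj (circleArc z θ))) :
    ∃ R > (0 : ℝ), ∀ f : H, EA.proj (Set.Ico 0 R) f = 0 →
      (Metric.infDist lam (essentialSpectrum U) - ε) * ‖f‖ ≤ ‖U f - lam • f‖ := by
  set d := Metric.infDist lam (essentialSpectrum U) with hd_def
  clear_value d
  by_cases hd : d ≤ ε
  · refine ⟨1, one_pos, fun f _ => ?_⟩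
    exact le_trans (mul_nonpos_of_nonpos_of_nonneg (by linarith) (norm_nonneg f)) (norm_nonneg _)
  push_neg at hd
  -- basic spectral facts
  have hspec : spectrum ℂ U ⊆ Metric.sphere 0 1 := spectrum.subset_circle_of_unitary hU
  have hlam_spec : lam ∈ spectrum ℂ U := hlam.1
  have hlam_norm : ‖lam‖ = 1 := by
    have := hspec hlam_spec
    rwa [mem_sphere_zero_iff_norm] at this
  have hnorm_spec : ∀ μ ∈ spectrum ℂ U, ‖μ‖ = 1 := fun μ hμ => by
    have := hspec hμ; rwa [mem_sphere_zero_iff_norm] at this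
  have hne : (essentialSpectrum U).Nonempty := by
    by_contra h
    rw [Set.not_nonempty_iff_eq_empty] at h
    rw [hd_def, h, Metric.infDist_empty] at hd
    linarith
  -- the constant and the arc
  set c := d - ε/2 with hc_def
  clear_value c
  have hc0 : 0 < c := by rw [hc_def]; linarith
  have hcd : c < d := by rw [hc_def]; linarith
  have hc2 : c < 2 := by
    obtain ⟨x, hx⟩ := hne
    have h1 : d ≤ dist lam x := hd_def ▸ Metric.infDist_le_dist_of_mem hx
    have h2 : dist lam x ≤ ‖lam‖ + ‖x‖ := by
      rw [dist_eq_norm]; exact norm_sub_le _ _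
    have h3 : ‖x‖ = 1 := hnorm_spec x hx.1
    rw [hlam_norm, h3] at h2
    rw [hc_def]; linarith
  set θ := 2 * Real.arcsin (c/2) with hθ_def
  clear_value θ
  have harcsin : Real.sin (θ/2) = c/2 := by
    rw [hθ_def, show 2 * Real.arcsin (c/2) / 2 = Real.arcsin (c/2) by ring]
    exact Real.sin_arcsin (by linarith) (by linarith)
  have hθpos : 0 < θ := by
    rw [hθ_def]
    have := Real.arcsin_pos.2 (show 0 < c/2 by linarith)
    linarith
  have hθpi : θ ≤ Real.pi := by
    rw [hθ_def]
    have := Real.arcsin_le_pi_div_two (c/2)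
    linarith
  -- distance formula on the circle
  have key_dist : ∀ k : ℝ, dist lam (lam * Complex.exp (Complex.I * k))
      = 2 * |Real.sin (k/2)| := by
    intro k
    rw [dist_eq_norm, show lam - lam * Complex.exp (Complex.I * k)
      = lam * (1 - Complex.exp (Complex.I * k)) by ring, norm_mul, hlam_norm, one_mul]
    exact my_norm_one_sub_exp k
  -- Claim A: points of the arc are within distance c of lam
  have hA : ∀ w ∈ circleArc lam θ, dist lam w ≤ c := by
    rintro w ⟨k, hk, rfl⟩
    rw [key_dist]
    have hk1 : |k| ≤ θ := abs_le.2 ⟨hk.1, hk.2⟩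
    have habs : |Real.sin (k/2)| = Real.sin (|k|/2) := my_abs_sin k (hk1.trans hθpi)
    have hmono : Real.sin (|k|/2) ≤ Real.sin (θ/2) := by
      apply Real.sin_le_sin_of_le_of_le_pi_div_two
      · linarith [abs_nonneg k, Real.pi_pos]
      · linarith [Real.arcsin_le_pi_div_two (c/2)]
      · linarith
    rw [habs, harcsin] at *
    linarith [hmono]
  -- the arc is disjoint from the essential spectrum
  have hdisj : Disjoint (circleArc lam θ) (essentialSpectrum U) := by
    rw [Set.disjoint_left]
    intro w hw hw'
    have h1 := hA w hw
    have h2 : d ≤ dist lam w := hd_def ▸ Metric.infDist_le_dist_of_mem hw'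
    linarith
  -- Claim B: spectrum points outside the arc are at distance ≥ c
  have hB : ∀ μ ∈ spectrum ℂ U \ circleArc lam θ, c ≤ dist lam μ := by
    rintro μ ⟨hμs, hμa⟩
    have hμ1 : ‖μ‖ = 1 := hnorm_spec μ hμs
    have hlam0 : lam ≠ 0 := by
      intro h; rw [h, norm_zero] at hlam_norm; norm_num at hlam_norm
    set k := Complex.arg (μ / lam) with hk_def
    have habs1 : ‖μ / lam‖ = 1 := by
      rw [norm_div, hμ1, hlam_norm]
      norm_num
    have hμeq : μ = lam * Complex.exp (Complex.I * k) := by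
      have h := Complex.norm_mul_exp_arg_mul_I (μ / lam)
      rw [habs1, Complex.ofReal_one, one_mul, ← hk_def] at h
      rw [mul_comm Complex.I (k : ℂ), h]
      field_simp
    have hkpi : |k| ≤ Real.pi := Complex.abs_arg_le_pi _
    have hkθ : θ < |k| := by
      by_contra h
      push_neg at h
      exact hμa ⟨k, ⟨(abs_le.1 h).1, (abs_le.1 h).2⟩, hμeq.symm⟩
    rw [hμeq, key_dist]
    have habs : |Real.sin (k/2)| = Real.sin (|k|/2) := my_abs_sin k hkpi
    have hmono : Real.sin (θ/2) ≤ Real.sin (|k|/2) := by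
      apply Real.sin_le_sin_of_le_of_le_pi_div_two
      · linarith [Real.pi_pos]
      · linarith
      · linarith
    rw [habs, harcsin] at *
    linarith [hmono]
  -- lower bound via the spectral measure on the complement of the arc
  have hQdist : ∀ ψ : H, EU.proj (spectrum ℂ U \ circleArc lam θ) ψ = ψ →
      c * ‖ψ‖ ≤ ‖U ψ - lam • ψ‖ := by
    intro ψ hψ
    rcases eq_or_ne ψ 0 with rfl | hψ0
    · simp
    have hne' : (spectrum ℂ U \ circleArc lam θ).Nonempty := by
      by_contra h
      rw [Set.not_nonempty_iff_eq_empty] at h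
      rw [h, EU.empty] at hψ
      exact hψ0 (by simpa using hψ.symm)
    have hcle : c ≤ Metric.infDist lam (spectrum ℂ U \ circleArc lam θ) := by
      by_contra h
      push_neg at h
      obtain ⟨y, hy, hylt⟩ := (Metric.infDist_lt_iff hne').1 h
      exact absurd hylt (not_lt.2 (hB y hy))
    calc c * ‖ψ‖ ≤ Metric.infDist lam (spectrum ℂ U \ circleArc lam θ) * ‖ψ‖ :=
          mul_le_mul_of_nonneg_right hcle (norm_nonneg ψ)
      _ ≤ _ := hEU.lower _ lam ψ hψ
  -- global upper bound
  have hup : ∀ ψ : H, ‖U ψ - lam • ψ‖ ≤ 2 * ‖ψ‖ := by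
    intro ψ
    apply hEU.upper (spectrum ℂ U) lam 2 ψ
    · rw [hEU.support]; rfl
    · intro z hz
      rw [Metric.mem_closedBall, dist_comm, dist_eq_norm]
      have h1 : ‖z‖ = 1 := hnorm_spec z hz
      calc ‖lam - z‖ ≤ ‖lam‖ + ‖z‖ := norm_sub_le _ _
        _ = 2 := by rw [hlam_norm, h1]; norm_num
  -- proof by contradiction
  by_contra hcon
  push_neg at hcon
  choose f hf1 hf2 using fun n : ℕ => hcon ((n : ℝ) + 1) (by positivity)
  have hf0 : ∀ n, f n ≠ 0 := by
    intro n h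
    have := hf2 n
    rw [h] at this
    simp at this
  set u : ℕ → H := fun n => ((‖f n‖ : ℂ))⁻¹ • f n with hu
  have hun : ∀ n, ‖u n‖ = 1 := by
    intro n
    rw [hu]
    simp only
    rw [norm_smul, norm_inv, Complex.norm_real, Real.norm_eq_abs,
      abs_of_pos (norm_pos_iff.2 (hf0 n))]
    exact inv_mul_cancel₀ (norm_ne_zero_iff.2 (hf0 n))
  have huE : ∀ n : ℕ, EA.proj (Set.Ico 0 ((n : ℝ) + 1)) (u n) = 0 := by
    intro n
    rw [hu]
    simp only [map_smul, hf1 n, smul_zero]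
  have huineq : ∀ n : ℕ, ‖U (u n) - lam • u n‖ < d - ε := by
    intro n
    have hfn : (0:ℝ) < ‖f n‖ := norm_pos_iff.2 (hf0 n)
    have heq : U (u n) - lam • u n = ((‖f n‖ : ℂ))⁻¹ • (U (f n) - lam • f n) := by
      rw [hu]
      simp only [map_smul, smul_sub, smul_comm lam]
    rw [heq, norm_smul, norm_inv, Complex.norm_real, Real.norm_eq_abs, abs_of_pos hfn]
    have := hf2 n
    rw [inv_mul_lt_iff₀ hfn]
    calc ‖U (f n) - lam • f n‖ < (d - ε) * ‖f n‖ := this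
      _ = ‖f n‖ * (d - ε) := by ring
  -- weak nullity
  have hweak : ∀ g : H, Filter.Tendsto (fun n => (inner ℂ g (u n) : ℂ)) Filter.atTop (nhds 0) := by
    intro g
    have hbound : ∀ n : ℕ, ‖(inner ℂ g (u n) : ℂ)‖
        ≤ ‖g - EA.proj (Set.Ico 0 ((n : ℝ) + 1)) g‖ := by
      intro n
      have h1 : (inner ℂ (EA.proj (Set.Ico 0 ((n : ℝ) + 1)) g) (u n) : ℂ) = 0 := by
        conv_lhs => rw [← EA.selfAdj]
        rw [ContinuousLinearMap.adjoint_inner_left, huE n, inner_zero_right]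
      calc ‖(inner ℂ g (u n) : ℂ)‖
          = ‖(inner ℂ (g - EA.proj (Set.Ico 0 ((n : ℝ) + 1)) g) (u n) : ℂ)‖ := by
            rw [inner_sub_left, h1, sub_zero]
        _ ≤ ‖g - EA.proj (Set.Ico 0 ((n : ℝ) + 1)) g‖ * ‖u n‖ := norm_inner_le_norm _ _
        _ = ‖g - EA.proj (Set.Ico 0 ((n : ℝ) + 1)) g‖ := by rw [hun, mul_one]
    have hto : Filter.Tendsto (fun n : ℕ => ‖g - EA.proj (Set.Ico 0 ((n : ℝ) + 1)) g‖)
        Filter.atTop (nhds 0) := by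
      have h1 : Filter.Tendsto (fun R : ℝ => g - EA.proj (Set.Ico 0 R) g)
          Filter.atTop (nhds 0) := by
        have := Filter.Tendsto.sub (tendsto_const_nhds (x := g)) (hconv g)
        simpa using this
      have h2 : Filter.Tendsto (fun n : ℕ => ((n : ℝ) + 1)) Filter.atTop Filter.atTop :=
        Filter.tendsto_atTop_add_const_right _ 1 tendsto_natCast_atTop_atTop
      have := (h1.comp h2).norm
      simpa using this
    exact squeeze_zero_norm hbound hto
  -- compactness of the arc projection
  set P := EU.proj (circleArc lam θ) with hP_def
  have hPcomp : IsCompactOperator P := hcompact lam θ hlam_norm hdisj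
  have hPu : Filter.Tendsto (fun n => P (u n)) Filter.atTop (nhds 0) :=
    compact_weak_null hPcomp (fun n => le_of_eq (hun n)) hweak
  -- decomposition
  set Q := EU.proj (spectrum ℂ U \ circleArc lam θ) with hQ_def
  have hPQ : ∀ ψ : H, P ψ + Q ψ = ψ := by
    intro ψ
    have hsplit : (spectrum ℂ U ∩ circleArc lam θ) ∪ (spectrum ℂ U \ circleArc lam θ)
        = spectrum ℂ U := Set.inter_union_diff _ _
    have hdisj2 : Disjoint (spectrum ℂ U ∩ circleArc lam θ) (spectrum ℂ U \ circleArc lam θ) :=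
      Set.disjoint_left.2 fun x hx hx2 => hx2.2 hx.2
    have hadd := PVM.proj_union EU hdisj2 ψ
    rw [hsplit] at hadd
    have h1 : EU.proj (spectrum ℂ U ∩ circleArc lam θ) ψ = P ψ := by
      have h := congrArg (fun T => T ψ) (EU.inter (spectrum ℂ U) (circleArc lam θ))
      simp only [ContinuousLinearMap.comp_apply] at h
      rw [hEU.support] at h
      rw [← h, hP_def]
      rfl
    have h2 : EU.proj (spectrum ℂ U) ψ = ψ := by rw [hEU.support]; rfl
    rw [h2, h1] at hadd
    rw [← hadd]
  have hQg : ∀ n, Q (u n - P (u n)) = u n - P (u n) := by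
    intro n
    have h1 : u n - P (u n) = Q (u n) := by
      have h := hPQ (u n)
      exact sub_eq_of_eq_add (h.symm.trans (add_comm _ _))
    rw [h1]
    have h := congrArg (fun T => T (u n))
      (EU.inter (spectrum ℂ U \ circleArc lam θ) (spectrum ℂ U \ circleArc lam θ))
    rw [Set.inter_self] at h
    simpa using h
  -- choose a large index
  have hgap : (0:ℝ) < (c - (d - ε)) / (c + 2) := by
    have h1 : c - (d - ε) = ε/2 := by rw [hc_def]; ring
    apply div_pos (by linarith) (by linarith)
  obtain ⟨N, hN⟩ := (Metric.tendsto_atTop.1 hPu ((c - (d - ε)) / (c + 2)) hgap)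
  have hN' := hN N le_rfl
  rw [dist_zero_right] at hN'
  set hh := P (u N) with hh_def
  set g := u N - hh with hg_def
  have hgQ : c * ‖g‖ ≤ ‖U g - lam • g‖ := hQdist g (by rw [hg_def, hh_def]; exact hQg N)
  have hdecomp : U (u N) - lam • u N = (U g - lam • g) + (U hh - lam • hh) := by
    have huN : u N = g + hh := by rw [hg_def]; abel
    rw [huN, map_add, smul_add]
    abel
  have htri : ‖U g - lam • g‖ ≤ ‖U (u N) - lam • u N‖ + ‖U hh - lam • hh‖ := by
    rw [hdecomp]
    calc ‖U g - lam • g‖ = ‖((U g - lam • g) + (U hh - lam • hh)) - (U hh - lam • hh)‖ := by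
          congr 1; abel
      _ ≤ ‖(U g - lam • g) + (U hh - lam • hh)‖ + ‖U hh - lam • hh‖ := norm_sub_le _ _
  have hnormg : 1 - ‖hh‖ ≤ ‖g‖ := by
    rw [hg_def]
    calc 1 - ‖hh‖ = ‖u N‖ - ‖hh‖ := by rw [hun N]
      _ ≤ ‖u N - hh‖ := norm_sub_norm_le _ _
  have hhsmall : (c + 2) * ‖hh‖ < c - (d - ε) := by
    have := (lt_div_iff₀ (show (0:ℝ) < c + 2 by linarith)).1 hN'
    linarith
  have e1 : c * (1 - ‖hh‖) ≤ c * ‖g‖ := mul_le_mul_of_nonneg_left hnormg hc0.le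
  have e2 : ‖U hh - lam • hh‖ ≤ 2 * ‖hh‖ := hup hh
  have e3 := huineq N
  nlinarith [norm_nonneg hh, hgQ, htri]
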